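/- Be-the-Perturbed-Leader is near-optimal: Let A ⊆ [0,1]^d be a nonempty set of actions and let M : ℝ^d → A be an optimization oracle, i.e., M(v) ∈ A and M(v)·v ≤ a·v for every v ∈ ℝ^d and every a ∈ A. Fix ε > 0, let v_0 ∈ [−1/ε, 1/ε]^d be any perturbation vector, and let v_1,...,v_T ∈ ℝ^d be any cost vectors. Then for every a ∈ A, Σ_{t=1}^T v_t · M(v_0 + v_1 + ... + v_t) ≤ Σ_{t=1}^T v_t · a + d/ε, where · denotes the Euclidean inner product. -/

import Mathlib

/-- Extended sequence of cost vectors: round 0 is the perturbation `v0`,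
rounds `1..T` are the costs `v`, and later rounds are zero. -/
def btlpExt {T d : ℕ} (v0 : Fin d → ℝ) (v : Fin T → Fin d → ℝ) : ℕ → Fin d → ℝ
  | 0 => v0
  | n + 1 => if h : n < T then v ⟨n, h⟩ else 0

/-- Partial sums of the extended sequence. -/
def btlpS {T d : ℕ} (v0 : Fin d → ℝ) (v : Fin T → Fin d → ℝ) (n : ℕ) : Fin d → ℝ :=
  ∑ i ∈ Finset.range n, btlpExt v0 v i

/-- Be-the-leader lemma: playing the minimizer of the running sum is at least as
good as any fixed action, over any prefix of the extended sequence. -/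
lemma btlp_be_the_leader {d T : ℕ} (A : Set (Fin d → ℝ))
    (M : (Fin d → ℝ) → (Fin d → ℝ)) (hM : ∀ v, M v ∈ A)
    (hopt : ∀ v, ∀ a ∈ A, ∑ k, M v k * v k ≤ ∑ k, a k * v k)
    (v0 : Fin d → ℝ) (v : Fin T → Fin d → ℝ) :
    ∀ n : ℕ, ∀ a ∈ A,
      ∑ i ∈ Finset.range n, ∑ k, btlpExt v0 v i k * M (btlpS v0 v (i + 1)) k
        ≤ ∑ k, btlpS v0 v n k * a k := by
  intro n
  induction n with
  | zero => intro a _; simp [btlpS]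
  | succ n ih =>
    intro a ha
    rw [Finset.sum_range_succ]
    have h1 := ih (M (btlpS v0 v (n + 1))) (hM _)
    have h2 : ∑ k, btlpS v0 v n k * M (btlpS v0 v (n + 1)) k
        + ∑ k, btlpExt v0 v n k * M (btlpS v0 v (n + 1)) k
        = ∑ k, btlpS v0 v (n + 1) k * M (btlpS v0 v (n + 1)) k := by
      rw [← Finset.sum_add_distrib]
      refine Finset.sum_congr rfl fun k _ => ?_
      have hS : btlpS v0 v (n + 1) k = btlpS v0 v n k + btlpExt v0 v n k := by
        simp [btlpS, Finset.sum_range_succ]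
      rw [hS]; ring
    have h3 := hopt (btlpS v0 v (n + 1)) a ha
    calc ∑ i ∈ Finset.range n, ∑ k, btlpExt v0 v i k * M (btlpS v0 v (i + 1)) k
          + ∑ k, btlpExt v0 v n k * M (btlpS v0 v (n + 1)) k
        ≤ ∑ k, btlpS v0 v (n + 1) k * M (btlpS v0 v (n + 1)) k := by
          rw [← h2]; exact add_le_add_left h1 _
      _ ≤ ∑ k, btlpS v0 v (n + 1) k * a k := by
          simpa [mul_comm] using h3

lemma btlp_filter_sum {d T : ℕ} (v : Fin T → Fin d → ℝ) (t : Fin T) (k : Fin d) :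
    (∑ s ∈ Finset.univ.filter (fun s => s ≤ t), v s k)
      = ∑ i ∈ Finset.range (t.val + 1), (if h : i < T then v ⟨i, h⟩ else 0) k := by
  have h1 : Finset.univ.filter (fun s => s ≤ t) = Finset.Iic t := by
    ext s; simp
  have h2 : (Finset.Iic t).map Fin.valEmbedding = Finset.Iic (t : ℕ) :=
    Fin.map_valEmbedding_Iic t
  have h3 : Finset.Iic (t : ℕ) = Finset.range (t.val + 1) := by
    ext i; simp [Nat.lt_succ_iff]
  rw [h1, ← h3, ← h2, Finset.sum_map]
  refine Finset.sum_congr rfl fun s _ => ?_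
  simp [Fin.valEmbedding, s.isLt]

/-- **Be-the-Perturbed-Leader is near-optimal.**
Let `A ⊆ [0,1]^d` be a nonempty action set with optimization oracle `M`
(i.e. `M v ∈ A` minimizes the linear cost `a ↦ a·v` over `A`). For any `ε > 0`, any
perturbation `v_0 ∈ [−1/ε, 1/ε]^d`, and any cost vectors `v_1,…,v_T`, the
Be-the-Perturbed-Leader strategy satisfies, for every `a ∈ A`,
`∑_t v_t · M(v_0 + v_1 + ⋯ + v_t) ≤ ∑_t v_t · a + d/ε`. -/
theorem be_the_perturbed_leader (d T : ℕ) (ε : ℝ) (hε : 0 < ε)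
    (A : Set (Fin d → ℝ)) (hA : A.Nonempty)
    (hA01 : ∀ a ∈ A, ∀ k, a k ∈ Set.Icc (0 : ℝ) 1)
    (M : (Fin d → ℝ) → (Fin d → ℝ))
    (hM : ∀ v, M v ∈ A)
    (hopt : ∀ v, ∀ a ∈ A, ∑ k, M v k * v k ≤ ∑ k, a k * v k)
    (v0 : Fin d → ℝ) (hv0 : ∀ k, v0 k ∈ Set.Icc (-(1 / ε)) (1 / ε))
    (v : Fin T → Fin d → ℝ) :
    ∀ a ∈ A,
      (∑ t : Fin T, ∑ k, v t k * M (v0 + ∑ s ∈ Finset.univ.filter (fun s => s ≤ t), v s) k)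
        ≤ (∑ t : Fin T, ∑ k, v t k * a k) + d / ε := by
  intro a ha
  -- the argument of M in round t equals the partial sum S (t+2)
  have hSarg : ∀ t : Fin T,
      (v0 + ∑ s ∈ Finset.univ.filter (fun s => s ≤ t), v s) = btlpS v0 v (t.val + 2) := by
    intro t
    funext k
    have : btlpS v0 v (t.val + 2) k
        = ∑ i ∈ Finset.range (t.val + 2), btlpExt v0 v i k := by
      simp [btlpS]
    rw [this, Finset.sum_range_succ']
    simp only [btlpExt]
    rw [Pi.add_apply, Finset.sum_apply, btlp_filter_sum v t k]
    rw [add_comm]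
  -- rewrite the played-costs sum as a range sum over the extended sequence
  have hLHS : (∑ t : Fin T, ∑ k, v t k *
        M (v0 + ∑ s ∈ Finset.univ.filter (fun s => s ≤ t), v s) k)
      = ∑ i ∈ Finset.range T, ∑ k, btlpExt v0 v (i + 1) k * M (btlpS v0 v (i + 2)) k := by
    rw [← Fin.sum_univ_eq_sum_range]
    refine Finset.sum_congr rfl fun t _ => ?_
    rw [hSarg t]
    refine Finset.sum_congr rfl fun k _ => ?_
    have hext : btlpExt v0 v (t.val + 1) = v t := by
      simp [btlpExt, t.isLt]
    rw [hext]
  -- be-the-leader applied up to round T+1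
  have key := btlp_be_the_leader A M hM hopt v0 v (T + 1) a ha
  rw [Finset.sum_range_succ'] at key
  -- identify round 0 of the extended sequence
  have hS1 : btlpS v0 v 1 = v0 := by
    funext k; simp [btlpS, btlpExt]
  have h0 : ∑ k, btlpExt v0 v 0 k * M (btlpS v0 v (0 + 1)) k
      = ∑ k, v0 k * M (btlpS v0 v 1) k := by norm_num [btlpExt]
  -- the total sum S (T+1)
  have hST : ∀ k, btlpS v0 v (T + 1) k = v0 k + ∑ i ∈ Finset.range T, btlpExt v0 v (i + 1) k := by
    intro k
    have : btlpS v0 v (T + 1) k = ∑ i ∈ Finset.range (T + 1), btlpExt v0 v i k := by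
      simp [btlpS]
    rw [this, Finset.sum_range_succ']
    simp [btlpExt, add_comm]
  have hRHS : (∑ t : Fin T, ∑ k, v t k * a k)
      = ∑ i ∈ Finset.range T, ∑ k, btlpExt v0 v (i + 1) k * a k := by
    rw [← Fin.sum_univ_eq_sum_range]
    refine Finset.sum_congr rfl fun t _ => ?_
    refine Finset.sum_congr rfl fun k _ => ?_
    have hext : btlpExt v0 v (t.val + 1) = v t := by
      simp [btlpExt, t.isLt]
    rw [hext]
  -- from key: played costs ≤ S(T+1)·a − v0·M(v0)
  have key2 : (∑ i ∈ Finset.range T, ∑ k, btlpExt v0 v (i + 1) k * M (btlpS v0 v (i + 2)) k)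
      ≤ (∑ i ∈ Finset.range T, ∑ k, btlpExt v0 v (i + 1) k * a k)
        + (∑ k, v0 k * a k - ∑ k, v0 k * M v0 k) := by
    have hsum : ∑ k, btlpS v0 v (T + 1) k * a k
        = ∑ k, v0 k * a k + ∑ i ∈ Finset.range T, ∑ k, btlpExt v0 v (i + 1) k * a k := by
      rw [Finset.sum_comm (s := Finset.range T)]
      rw [← Finset.sum_add_distrib]
      refine Finset.sum_congr rfl fun k _ => ?_
      rw [hST k, add_mul, Finset.sum_mul]
    rw [h0, hS1] at key
    have := key
    rw [hsum] at this
    linarith [this]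
  -- bound the perturbation term by d/ε
  have hpert : (∑ k, v0 k * a k - ∑ k, v0 k * M v0 k) ≤ d / ε := by
    rw [← Finset.sum_sub_distrib]
    have hbound : ∀ k : Fin d, v0 k * a k - v0 k * M v0 k ≤ 1 / ε := by
      intro k
      have hv := hv0 k
      have ha' := hA01 a ha k
      have hm := hA01 (M v0) (hM v0) k
      have habs : |v0 k| ≤ 1 / ε := abs_le.mpr ⟨hv.1, hv.2⟩
      have hd : |a k - M v0 k| ≤ 1 := by
        rw [abs_le]
        constructor <;> [linarith [ha'.1, hm.2]; linarith [ha'.2, hm.1]]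
      calc v0 k * a k - v0 k * M v0 k = v0 k * (a k - M v0 k) := by ring
        _ ≤ |v0 k * (a k - M v0 k)| := le_abs_self _
        _ = |v0 k| * |a k - M v0 k| := abs_mul _ _
        _ ≤ (1 / ε) * 1 := by
            apply mul_le_mul habs hd (abs_nonneg _)
            positivity
        _ = 1 / ε := mul_one _
    calc ∑ k : Fin d, (v0 k * a k - v0 k * M v0 k) ≤ ∑ _k : Fin d, (1 / ε) :=
          Finset.sum_le_sum fun k _ => hbound k
      _ = d * (1 / ε) := by simp [Finset.sum_const, mul_comm]
      _ = d / ε := by ring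
  rw [hLHS, hRHS]
  linarith [key2, hpert]
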